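/- In the 5-tuple setup for a (house, bull)-free graph G: for any vertex v ∈ V(G) ∖ (A ∪ B) and any i ∈ {1, …, 5} (indices modulo 5), v is anticomplete to at least one of the four sets A_i, A_{i+1}, A_{i+2}, A_{i+3}. -/

import Mathlib

open SimpleGraph

/-- The bull graph: vertices a,b,c,d,e = 0,1,2,3,4; edges ab,bc,cd,be,ce. -/
def bull : SimpleGraph (Fin 5) :=
  SimpleGraph.fromEdgeSet {s(0,1), s(1,2), s(2,3), s(1,4), s(2,4)}

/-- The house graph: complement of the path on five vertices. -/
def house : SimpleGraph (Fin 5) := (SimpleGraph.pathGraph 5)ᶜ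

/-- `G` contains no induced subgraph isomorphic to `F`. -/
def FreeOf {V W : Type*} (G : SimpleGraph V) (F : SimpleGraph W) : Prop :=
  ¬ ∃ f : W ↪ V, ∀ a b : W, G.Adj (f a) (f b) ↔ F.Adj a b

/-- A homogeneous set: every outside vertex is complete or anticomplete to it. -/
def IsHomogSet {V : Type*} (G : SimpleGraph V) (S : Set V) : Prop :=
  ∀ v ∉ S, (∀ s ∈ S, G.Adj v s) ∨ (∀ s ∈ S, ¬ G.Adj v s)

/-- A proper homogeneous set: at least two vertices and not all of `V`. -/
def IsProperHomogSet {V : Type*} (G : SimpleGraph V) (S : Set V) : Prop :=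
  IsHomogSet G S ∧ S.Nontrivial ∧ S ≠ Set.univ

/-- A stable (independent) set. -/
def IsStableSet {V : Type*} (G : SimpleGraph V) (S : Set V) : Prop :=
  S.Pairwise fun u v => ¬ G.Adj u v

/-- A module: a nonempty homogeneous set that overlaps no homogeneous set. -/
def IsModuleSet {V : Type*} (G : SimpleGraph V) (M : Set V) : Prop :=
  M.Nonempty ∧ IsHomogSet G M ∧
    ∀ S : Set V, IsHomogSet G S → S ⊆ M ∨ M ⊆ S ∨ S ∩ M = ∅

/-- A quasi-maximal module: a module, different from `V`, such that the only
module strictly containing it is `V`. -/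
def IsQuasiMaxModule {V : Type*} (G : SimpleGraph V) (M : Set V) : Prop :=
  IsModuleSet G M ∧ M ≠ Set.univ ∧
    ∀ S : Set V, IsModuleSet G S → M ⊂ S → S = Set.univ

/-- A clique cover: a partition of the vertex set into cliques. -/
def IsCliqueCover {V : Type*} (G : SimpleGraph V) (C : Set (Set V)) : Prop :=
  Setoid.IsPartition C ∧ ∀ Q ∈ C, G.IsClique Q

/-- `cc G`: the minimum number of cliques in a clique cover of `G`. -/
noncomputable def cliqueCoverNumber {V : Type*} (G : SimpleGraph V) : ℕ :=
  sInf {n | ∃ C : Set (Set V), IsCliqueCover G C ∧ C.ncard = n}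

/-- `S` is complete to `T`: every vertex of `S` is adjacent to every vertex of `T`. -/
def CompleteTo {V : Type*} (G : SimpleGraph V) (S T : Set V) : Prop :=
  ∀ s ∈ S, ∀ t ∈ T, G.Adj s t

/-- `S` is anticomplete to `T`: no vertex of `S` is adjacent to a vertex of `T`. -/
def AnticompleteTo {V : Type*} (G : SimpleGraph V) (S T : Set V) : Prop :=
  ∀ s ∈ S, ∀ t ∈ T, ¬ G.Adj s t

/-- The 5-tuple setup from the paper: five nonempty pairwise disjoint sets
`A 0, …, A 4` (corresponding to `A_1, …, A_5`, indices modulo 5) with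
`A i` complete to `A (i+1)` for `i ∈ {0,1,2,3}`, `A i` anticomplete to
`A (i+2)` for all `i`, and `A 4` complete or anticomplete to `A 0`. -/
def GoodTuple {V : Type*} (G : SimpleGraph V) (A : Fin 5 → Set V) : Prop :=
  (∀ i, (A i).Nonempty) ∧
  (Pairwise fun i j => Disjoint (A i) (A j)) ∧
  (∀ i : Fin 5, i ≠ 4 → CompleteTo G (A i) (A (i + 1))) ∧
  (∀ i : Fin 5, AnticompleteTo G (A i) (A (i + 2))) ∧
  (CompleteTo G (A 4) (A 0) ∨ AnticompleteTo G (A 4) (A 0))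

/-- A good tuple whose union `A` is inclusionwise maximal among all good tuples. -/
def MaximalGoodTuple {V : Type*} (G : SimpleGraph V) (A : Fin 5 → Set V) : Prop :=
  GoodTuple G A ∧ ∀ A' : Fin 5 → Set V, GoodTuple G A' → ¬ (⋃ i, A i) ⊂ (⋃ i, A' i)

/-- The set `B` of vertices outside `A` that are complete to `A`. -/
def Bset {V : Type*} (G : SimpleGraph V) (A : Fin 5 → Set V) : Set V :=
  {v | v ∉ (⋃ i, A i) ∧ ∀ a ∈ ⋃ i, A i, G.Adj v a}

section Stmt9Aux

variable {V : Type*} {G : SimpleGraph V}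

private lemma bull_case (hBull : FreeOf G bull) {a b c d e : V}
    (hab : G.Adj a b) (hbc : G.Adj b c) (hcd : G.Adj c d) (hbe : G.Adj b e)
    (hce : G.Adj c e) (hac : ¬ G.Adj a c) (had : ¬ G.Adj a d)
    (hae : ¬ G.Adj a e) (hbd : ¬ G.Adj b d) (hde : ¬ G.Adj d e) : False := by
  have nab : a ≠ b := hab.ne
  have nac : a ≠ c := fun h => hae (h ▸ hce)
  have nad : a ≠ d := fun h => hac (h ▸ hcd.symm)
  have nae : a ≠ e := fun h => hac (h ▸ hce.symm)
  have nbc : b ≠ c := hbc.ne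
  have nbd : b ≠ d := fun h => hde (h ▸ hbe)
  have nbe : b ≠ e := hbe.ne
  have ncd : c ≠ d := hcd.ne
  have nce : c ≠ e := hce.ne
  have nde : d ≠ e := fun h => hbd (h ▸ hbe)
  apply hBull
  refine ⟨⟨![a,b,c,d,e], ?_⟩, ?_⟩
  · intro x y h
    fin_cases x <;> fin_cases y <;> simp_all
  · intro x y
    change G.Adj (![a,b,c,d,e] x) (![a,b,c,d,e] y) ↔ _
    fin_cases x <;> fin_cases y <;>
      simp_all [bull, Sym2.eq, Sym2.rel_iff', G.adj_comm]

private lemma house_case (hHouse : FreeOf G house) {a b c d e : V}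
    (h02 : G.Adj a c) (h03 : G.Adj a d) (h04 : G.Adj a e) (h13 : G.Adj b d)
    (h14 : G.Adj b e) (h24 : G.Adj c e) (h01 : ¬G.Adj a b) (h12 : ¬G.Adj b c)
    (h23 : ¬G.Adj c d) (h34 : ¬G.Adj d e) : False := by
  have nab : a ≠ b := fun h => h12 (h ▸ h02)
  have nac : a ≠ c := fun h => h23 (h ▸ h03)
  have nad : a ≠ d := fun h => h34 (h ▸ h04)
  have nae : a ≠ e := fun h => h34 (h ▸ h03.symm)
  have nbc : b ≠ c := fun h => h01 (h.symm ▸ h02)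
  have nbd : b ≠ d := h13.ne
  have nbe : b ≠ e := h14.ne
  have ncd : c ≠ d := fun h => h34 (h ▸ h24)
  have nce : c ≠ e := h24.ne
  have nde : d ≠ e := fun h => h23 (h ▸ h24)
  apply hHouse
  refine ⟨⟨![a,b,c,d,e], ?_⟩, ?_⟩
  · intro x y h
    fin_cases x <;> fin_cases y <;> simp_all
  · intro x y
    change G.Adj (![a,b,c,d,e] x) (![a,b,c,d,e] y) ↔ _
    fin_cases x <;> fin_cases y <;>
      simp_all [house, SimpleGraph.pathGraph_adj, G.adj_comm] <;> decide

/-- House lemma: if `v` is adjacent to vertices of `A j`, `A (j+1)`, `A (j+3)`,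
then `v` is complete to `A (j+2)`. -/
private lemma Hlem (hHouse : FreeOf G house) {A : Fin 5 → Set V}
    (hanti : ∀ i : Fin 5, AnticompleteTo G (A i) (A (i + 2))) (j : Fin 5)
    (c1 : CompleteTo G (A j) (A (j+1))) (c2 : CompleteTo G (A (j+1)) (A (j+2)))
    (c3 : CompleteTo G (A (j+2)) (A (j+3)))
    {v p q r : V} (hp : p ∈ A j) (hq : q ∈ A (j+1)) (hr : r ∈ A (j+3))
    (ap : G.Adj v p) (aq : G.Adj v q) (ar : G.Adj v r) :
    ∀ y ∈ A (j+2), G.Adj v y := by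
  intro y hy
  by_contra hvy
  have e1 : j + 3 + 2 = j := by
    rw [add_assoc, show (3:Fin 5)+2 = 0 from rfl, add_zero]
  have hr2 : r ∈ A (j+1+2) := by rw [add_assoc]; exact hr
  refine house_case hHouse ap ar aq (c3 y hy r hr) ((c2 q hq y hy).symm)
    (c1 p hp q hq) hvy (fun h => hanti j p hp y hy h.symm) ?_ ?_
  · exact fun h => hanti (j+3) r hr p (e1.symm ▸ hp) h.symm
  · exact fun h => hanti (j+1) q hq r hr2 h.symm

/-- House lemma: if `v` is adjacent to vertices of `A j`, `A (j+2)`, `A (j+3)`,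
then `v` is complete to `A (j+1)`. -/
private lemma H'lem (hHouse : FreeOf G house) {A : Fin 5 → Set V}
    (hanti : ∀ i : Fin 5, AnticompleteTo G (A i) (A (i + 2))) (j : Fin 5)
    (c1 : CompleteTo G (A j) (A (j+1))) (c2 : CompleteTo G (A (j+1)) (A (j+2)))
    (c3 : CompleteTo G (A (j+2)) (A (j+3)))
    {v p r s : V} (hp : p ∈ A j) (hr : r ∈ A (j+2)) (hs : s ∈ A (j+3))
    (ap : G.Adj v p) (ar : G.Adj v r) (as' : G.Adj v s) :
    ∀ y ∈ A (j+1), G.Adj v y := by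
  intro y hy
  by_contra hvy
  have e1 : j + 3 + 2 = j := by
    rw [add_assoc, show (3:Fin 5)+2 = 0 from rfl, add_zero]
  have hs2 : s ∈ A (j+1+2) := by rw [add_assoc]; exact hs
  exact house_case hHouse as' ap ar ((c1 p hp y hy).symm) (c2 y hy r hr)
    ((c3 r hr s hs).symm) hvy (hanti (j+1) y hy s hs2)
    (hanti (j+3) s hs p (e1.symm ▸ hp)) (hanti j p hp r hr)

/-- Bull lemma (anticomplete boundary case): neighbours in `A 0`, `A 2`, `A 3`
force `v` complete to `A 4`. -/
private lemma LNlem (hBull : FreeOf G bull) {A : Fin 5 → Set V}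
    (hanti : ∀ i : Fin 5, AnticompleteTo G (A i) (A (i + 2)))
    (hN : AnticompleteTo G (A 4) (A 0))
    (c23 : CompleteTo G (A 2) (A 3)) (c34 : CompleteTo G (A 3) (A 4))
    {v p q r : V} (hp : p ∈ A 0) (hq : q ∈ A 2) (hr : r ∈ A 3)
    (ap : G.Adj v p) (aq : G.Adj v q) (ar : G.Adj v r) :
    ∀ y ∈ A 4, G.Adj v y := by
  intro y hy
  by_contra hvy
  exact bull_case hBull ap.symm ar (c34 r hr y hy) aq ((c23 q hq r hr).symm)
    (fun h => hanti 3 r hr p hp h.symm) (fun h => hN y hy p hp h.symm)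
    (hanti 0 p hp q hq) hvy (fun h => hanti 2 q hq y hy h.symm)

/-- Bull lemma (anticomplete boundary case): neighbours in `A 4`, `A 2`, `A 1`
force `v` complete to `A 0`. -/
private lemma LN'lem (hBull : FreeOf G bull) {A : Fin 5 → Set V}
    (hanti : ∀ i : Fin 5, AnticompleteTo G (A i) (A (i + 2)))
    (hN : AnticompleteTo G (A 4) (A 0))
    (c01 : CompleteTo G (A 0) (A 1)) (c12 : CompleteTo G (A 1) (A 2))
    {v p q r : V} (hp : p ∈ A 4) (hq : q ∈ A 2) (hr : r ∈ A 1)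
    (ap : G.Adj v p) (aq : G.Adj v q) (ar : G.Adj v r) :
    ∀ y ∈ A 0, G.Adj v y := by
  intro y hy
  by_contra hvy
  exact bull_case hBull ap.symm ar ((c01 y hy r hr).symm) aq (c12 r hr q hq)
    (hanti 4 p hp r hr) (hN p hp y hy)
    (fun h => hanti 2 q hq p hp h.symm) hvy (hanti 0 y hy q hq)

end Stmt9Aux
/-- In the 5-tuple setup for a (house, bull)-free graph `G`:
for any vertex `v ∉ A ∪ B` and any `i` (indices modulo 5), `v` is anticomplete
to at least one of the four sets `A i`, `A (i+1)`, `A (i+2)`, `A (i+3)`. -/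
theorem stmt9 {V : Type*} [Fintype V] (G : SimpleGraph V)
    (hHouse : FreeOf G house) (hBull : FreeOf G bull)
    (A : Fin 5 → Set V) (hA : MaximalGoodTuple G A)
    (v : V) (hv : v ∉ (⋃ i, A i) ∪ Bset G A) (i : Fin 5) :
    AnticompleteTo G {v} (A i) ∨ AnticompleteTo G {v} (A (i + 1)) ∨
    AnticompleteTo G {v} (A (i + 2)) ∨ AnticompleteTo G {v} (A (i + 3)) := by
  obtain ⟨⟨hne, hdisj, hcompl, hanti, hor⟩, -⟩ := hA
  simp only [Set.mem_union, not_or] at hv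
  obtain ⟨hvA, hvB⟩ := hv
  by_contra hcon
  push_neg at hcon
  obtain ⟨h0, h1, h2, h3⟩ := hcon
  have nb : ∀ k : Fin 5, ¬ AnticompleteTo G {v} (A k) → ∃ x ∈ A k, G.Adj v x := by
    intro k h
    by_contra hh
    push_neg at hh
    exact h fun s hs t ht hadj => by
      rw [Set.mem_singleton_iff] at hs; subst hs; exact hh t ht hadj
  obtain ⟨x0, m0, a0⟩ := nb _ h0
  obtain ⟨x1, m1, a1⟩ := nb _ h1
  obtain ⟨x2, m2, a2⟩ := nb _ h2
  obtain ⟨x3, m3, a3⟩ := nb _ h3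
  clear h0 h1 h2 h3 nb
  have finish : (∀ k : Fin 5, ∀ y ∈ A k, G.Adj v y) → False := by
    intro hall
    exact hvB ⟨hvA, fun a ha => by
      obtain ⟨k, hk⟩ := Set.mem_iUnion.mp ha
      exact hall k a hk⟩
  rcases hor with hco | hN
  · -- A 4 complete to A 0 : cyclic case, only the house lemma is needed
    have hC : ∀ j : Fin 5, CompleteTo G (A j) (A (j+1)) := by
      intro j
      by_cases h : j = 4
      · subst h; exact hco
      · exact hcompl j h
    have hC1 : ∀ j : Fin 5, CompleteTo G (A (j+1)) (A (j+2)) := by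
      intro j; have := hC (j+1); rwa [add_assoc] at this
    have hC2 : ∀ j : Fin 5, CompleteTo G (A (j+2)) (A (j+3)) := by
      intro j; have := hC (j+2); rwa [add_assoc] at this
    have H : ∀ j : Fin 5, ∀ {p q r : V}, p ∈ A j → q ∈ A (j+1) → r ∈ A (j+3) →
        G.Adj v p → G.Adj v q → G.Adj v r → ∀ y ∈ A (j+2), G.Adj v y :=
      fun j {p q r} hp hq hr ap aq ar => Hlem hHouse hanti j (hC j) (hC1 j) (hC2 j) hp hq hr ap aq ar
    have C2 : ∀ y ∈ A (i+2), G.Adj v y := H i m0 m1 m3 a0 a1 a3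
    have C4 : ∀ y ∈ A (i+4), G.Adj v y := by
      have := H (i+2) m2 (by rw [add_assoc]; exact m3)
        (by rw [add_assoc, show (2:Fin 5)+3 = 0 from rfl, add_zero]; exact m0) a2 a3 a0
      intro y hy
      exact this y (by rw [add_assoc]; exact hy)
    obtain ⟨w4, mw4⟩ := hne (i+4)
    have aw4 : G.Adj v w4 := C4 w4 mw4
    have C3 : ∀ y ∈ A (i+3), G.Adj v y := by
      have := H (i+1) m1 (by rw [add_assoc]; exact m2)
        (by rw [add_assoc]; exact mw4) a1 a2 aw4
      intro y hy
      exact this y (by rw [add_assoc]; exact hy)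
    have C0 : ∀ y ∈ A i, G.Adj v y := by
      have := H (i+3) m3 (by rw [add_assoc]; exact mw4)
        (by rw [add_assoc, show (3:Fin 5)+3 = 1 from rfl]; exact m1) a3 aw4 a1
      intro y hy
      exact this y
        (by rw [add_assoc, show (3:Fin 5)+2 = 0 from rfl, add_zero]; exact hy)
    have C1 : ∀ y ∈ A (i+1), G.Adj v y := by
      have := H (i+4) mw4
        (by rw [add_assoc, show (4:Fin 5)+1 = 0 from rfl, add_zero]; exact m0)
        (by rw [add_assoc, show (4:Fin 5)+3 = 2 from rfl]; exact m2) aw4 a0 a2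
      intro y hy
      exact this y (by rw [add_assoc, show (4:Fin 5)+2 = 1 from rfl]; exact hy)
    apply finish
    intro k y hy
    obtain ⟨t, rfl⟩ : ∃ t, k = i + t := ⟨k - i, by abel⟩
    fin_cases t
    · exact C0 y (by simpa using hy)
    · exact C1 y (by simpa using hy)
    · exact C2 y (by simpa using hy)
    · exact C3 y (by simpa using hy)
    · exact C4 y (by simpa using hy)
  · -- A 4 anticomplete to A 0 : path case
    have c0 : CompleteTo G (A 0) (A 1) := hcompl 0 (by decide)
    have c1 : CompleteTo G (A 1) (A 2) := hcompl 1 (by decide)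
    have c2 : CompleteTo G (A 2) (A 3) := hcompl 2 (by decide)
    have c3 : CompleteTo G (A 3) (A 4) := hcompl 3 (by decide)
    have H0 : ∀ {p q r : V}, p ∈ A 0 → q ∈ A 1 → r ∈ A 3 →
        G.Adj v p → G.Adj v q → G.Adj v r → ∀ y ∈ A 2, G.Adj v y :=
      fun {p q r} hp hq hr ap aq ar => Hlem hHouse hanti 0 c0 c1 c2 hp hq hr ap aq ar
    have H1 : ∀ {p q r : V}, p ∈ A 1 → q ∈ A 2 → r ∈ A 4 →
        G.Adj v p → G.Adj v q → G.Adj v r → ∀ y ∈ A 3, G.Adj v y :=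
      fun {p q r} hp hq hr ap aq ar => Hlem hHouse hanti 1 c1 c2 c3 hp hq hr ap aq ar
    have H0' : ∀ {p r s : V}, p ∈ A 0 → r ∈ A 2 → s ∈ A 3 →
        G.Adj v p → G.Adj v r → G.Adj v s → ∀ y ∈ A 1, G.Adj v y :=
      fun {p r s} hp hr hs ap ar as' => H'lem hHouse hanti 0 c0 c1 c2 hp hr hs ap ar as'
    have H1' : ∀ {p r s : V}, p ∈ A 1 → r ∈ A 3 → s ∈ A 4 →
        G.Adj v p → G.Adj v r → G.Adj v s → ∀ y ∈ A 2, G.Adj v y :=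
      fun {p r s} hp hr hs ap ar as' => H'lem hHouse hanti 1 c1 c2 c3 hp hr hs ap ar as'
    have LN : ∀ {p q r : V}, p ∈ A 0 → q ∈ A 2 → r ∈ A 3 →
        G.Adj v p → G.Adj v q → G.Adj v r → ∀ y ∈ A 4, G.Adj v y :=
      fun {p q r} hp hq hr ap aq ar => LNlem hBull hanti hN c2 c3 hp hq hr ap aq ar
    have LN' : ∀ {p q r : V}, p ∈ A 4 → q ∈ A 2 → r ∈ A 1 →
        G.Adj v p → G.Adj v q → G.Adj v r → ∀ y ∈ A 0, G.Adj v y :=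
      fun {p q r} hp hq hr ap aq ar => LN'lem hBull hanti hN c0 c1 hp hq hr ap aq ar
    apply finish
    fin_cases i
    · -- x0 ∈ A 0, x1 ∈ A 1, x2 ∈ A 2, x3 ∈ A 3
      have C2' := H0 m0 m1 m3 a0 a1 a3
      have C1' := H0' m0 m2 m3 a0 a2 a3
      have C4' := LN m0 m2 m3 a0 a2 a3
      obtain ⟨w, mw⟩ := hne 4
      have aw : G.Adj v w := C4' w mw
      have C3' := H1 m1 m2 mw a1 a2 aw
      have C0' := LN' mw m2 m1 aw a2 a1
      intro k; fin_cases k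
      exacts [C0', C1', C2', C3', C4']
    · -- x0 ∈ A 1, x1 ∈ A 2, x2 ∈ A 3, x3 ∈ A 4
      have C3' := H1 m0 m1 m3 a0 a1 a3
      have C2' := H1' m0 m2 m3 a0 a2 a3
      have C0' := LN' m3 m1 m0 a3 a1 a0
      obtain ⟨w, mw⟩ := hne 0
      have aw : G.Adj v w := C0' w mw
      have C1' := H0' mw m1 m2 aw a1 a2
      have C4' := LN mw m1 m2 aw a1 a2
      intro k; fin_cases k
      exacts [C0', C1', C2', C3', C4']
    · -- x0 ∈ A 2, x1 ∈ A 3, x2 ∈ A 4, x3 ∈ A 0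
      have C4' := LN m3 m0 m1 a3 a0 a1
      have C1' := H0' m3 m0 m1 a3 a0 a1
      obtain ⟨w, mw⟩ := hne 1
      have aw : G.Adj v w := C1' w mw
      have C3' := H1 mw m0 m2 aw a0 a2
      have C0' := LN' m2 m0 mw a2 a0 aw
      have C2' := H0 m3 mw m1 a3 aw a1
      intro k; fin_cases k
      exacts [C0', C1', C2', C3', C4']
    · -- x0 ∈ A 3, x1 ∈ A 4, x2 ∈ A 0, x3 ∈ A 1
      have C2' := H0 m2 m3 m0 a2 a3 a0
      obtain ⟨w, mw⟩ := hne 2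
      have aw : G.Adj v w := C2' w mw
      have C4' := LN m2 mw m0 a2 aw a0
      have C1' := H0' m2 mw m0 a2 aw a0
      have C3' := H1 m3 mw m1 a3 aw a1
      have C0' := LN' m1 mw m3 a1 aw a3
      intro k; fin_cases k
      exacts [C0', C1', C2', C3', C4']
    · -- x0 ∈ A 4, x1 ∈ A 0, x2 ∈ A 1, x3 ∈ A 2
      have C3' := H1 m2 m3 m0 a2 a3 a0
      obtain ⟨w, mw⟩ := hne 3
      have aw : G.Adj v w := C3' w mw
      have C2' := H1' m2 mw m0 a2 aw a0
      have C0' := LN' m0 m3 m2 a0 a3 a2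
      have C4' := LN m1 m3 mw a1 a3 aw
      have C1' := H0' m1 m3 mw a1 a3 aw
      intro k; fin_cases k
      exacts [C0', C1', C2', C3', C4']
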